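/- Let X ⊆ R^d be a bounded set, P ⊆ X a polytope, H a hyperplane inside P, epsilon > 0, and n >= 2. Then there exist W in R^{n x d} with all rows nonzero and b in R^n such that the ReLU layer f_{W,b} is an oriented slab layer on P, is transparent on X, and every hyperplane H_i = {x : <W_i, x> + b_i = 0} is epsilon-close to H. -/

import Mathlib

namespace ReLUNet

open scoped BigOperators symmDiff

/-- The standard inner product `⟨w, x⟩ = ∑ j, w j * x j` on `ℝ^d`. -/
def sInner {d : ℕ} (w x : Fin d → ℝ) : ℝ := ∑ j, w j * x j

/-- The Euclidean norm on `ℝ^d`. -/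
noncomputable def euclNorm {d : ℕ} (w : Fin d → ℝ) : ℝ := Real.sqrt (∑ j, (w j) ^ 2)

/-- The (affine) hyperplane `{x : ⟨w, x⟩ + β = 0}`. -/
def Hyp {d : ℕ} (w : Fin d → ℝ) (β : ℝ) : Set (Fin d → ℝ) := {x | sInner w x + β = 0}

/-- A polytope is the convex hull of a finite set. -/
def IsPolytope {d : ℕ} (P : Set (Fin d → ℝ)) : Prop :=
  ∃ s : Finset (Fin d → ℝ), P = convexHull ℝ (↑s : Set (Fin d → ℝ))

/-- The hyperplane `{⟨w,·⟩ + β = 0}` is *inside* `P` if it meets the relative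
interior of `P` and `P` is not contained in it. -/
def HypInside {d : ℕ} (w : Fin d → ℝ) (β : ℝ) (P : Set (Fin d → ℝ)) : Prop :=
  (Hyp w β ∩ intrinsicInterior ℝ P).Nonempty ∧ ¬ P ⊆ Hyp w β

/-- The ReLU layer `x ↦ ReLU (W x + b)`. -/
noncomputable def reluLayer {d n : ℕ} (W : Fin n → Fin d → ℝ) (b : Fin n → ℝ)
    (x : Fin d → ℝ) : Fin n → ℝ :=
  fun i => max (sInner (W i) x + b i) 0

/-- The activation pattern `S_i = {1, …, i} Δ {n}` (in `0`-based indexing: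
`{j : j < i} Δ {j : j = n - 1}`). -/
def slabSet (n i : ℕ) : Set (Fin n) :=
  {j : Fin n | (j : ℕ) < i} ∆ {j : Fin n | (j : ℕ) = n - 1}

/-- A slab layer on a polytope `P`: rows nonzero, each hyperplane inside `P`,
and no two hyperplanes meet inside `P`. -/
def IsSlabLayer {d n : ℕ} (W : Fin n → Fin d → ℝ) (b : Fin n → ℝ)
    (P : Set (Fin d → ℝ)) : Prop :=
  (∀ i, W i ≠ 0) ∧ (∀ i, HypInside (W i) (b i) P) ∧
    ∀ i j, i ≠ j → Hyp (W i) (b i) ∩ Hyp (W j) (b j) ∩ P = ∅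

/-- An oriented slab layer: on `P`, the strict activation patterns are exactly
the sets `slabSet n i` for `i = 0, …, n`, and all of them occur. -/
def IsOriented {d n : ℕ} (W : Fin n → Fin d → ℝ) (b : Fin n → ℝ)
    (P : Set (Fin d → ℝ)) : Prop :=
  (∀ x ∈ P, (∀ j, sInner (W j) x + b j ≠ 0) →
      ∃ i ≤ n, {j | 0 < sInner (W j) x + b j} = slabSet n i) ∧
    (∀ i ≤ n, ∃ x ∈ P, (∀ j, sInner (W j) x + b j ≠ 0) ∧
      {j | 0 < sInner (W j) x + b j} = slabSet n i)

/-- A ReLU layer is transparent on `X` if at every point of `X` some neuron has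
nonnegative preactivation. -/
def Transparent {d n : ℕ} (W : Fin n → Fin d → ℝ) (b : Fin n → ℝ)
    (X : Set (Fin d → ℝ)) : Prop :=
  ∀ x ∈ X, ∃ i, 0 ≤ sInner (W i) x + b i

/-- The `ℓ^∞` norm of the pair `(w, β)`. -/
noncomputable def infNormPair {d : ℕ} (w : Fin d → ℝ) (β : ℝ) : ℝ :=
  max (⨆ j, |w j|) |β|

/-- `(w', β')` is `ε`-close to `(w, β)` after normalizing by the Euclidean norms
of `w'` and `w`, up to a global sign. -/
noncomputable def EpsClose {d : ℕ} (w' : Fin d → ℝ) (β' : ℝ)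
    (w : Fin d → ℝ) (β : ℝ) (ε : ℝ) : Prop :=
  min
    (infNormPair (fun j => w' j / euclNorm w' - w j / euclNorm w)
      (β' / euclNorm w' - β / euclNorm w))
    (infNormPair (fun j => w' j / euclNorm w' + w j / euclNorm w)
      (β' / euclNorm w' + β / euclNorm w)) < ε

/-- A one-hidden-layer ReLU network `x ↦ W₂ ReLU (W₁ x + b₁) + b₂`. -/
noncomputable def oneLayer {d n m : ℕ} (W1 : Fin n → Fin d → ℝ) (b1 : Fin n → ℝ)
    (W2 : Fin m → Fin n → ℝ) (b2 : Fin m → ℝ) (x : Fin d → ℝ) : Fin m → ℝ :=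
  fun p => (∑ i, W2 p i * max (sInner (W1 i) x + b1 i) 0) + b2 p

/-- The set of breakpoints of `f`: points near which `f` is not affine. -/
def Breakpoints {d m : ℕ} (f : (Fin d → ℝ) → Fin m → ℝ) : Set (Fin d → ℝ) :=
  {x | ¬ ∃ U : Set (Fin d → ℝ), IsOpen U ∧ x ∈ U ∧
      ∃ (A : Fin m → Fin d → ℝ) (c : Fin m → ℝ),
        ∀ y ∈ U, ∀ p, f y p = (∑ j, A p j * y j) + c p}


variable {d : ℕ}

lemma mem_intrinsicInterior_iff' {P : Set (Fin d → ℝ)} {x : Fin d → ℝ} :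
    x ∈ intrinsicInterior ℝ P ↔
      x ∈ affineSpan ℝ P ∧ ∃ ε > 0, ∀ v ∈ affineSpan ℝ P, dist v x < ε → v ∈ P := by
  constructor
  · intro hx
    obtain ⟨y, hy, rfl⟩ := mem_intrinsicInterior.mp hx
    refine ⟨y.2, ?_⟩
    rw [mem_interior_iff_mem_nhds, Metric.mem_nhds_iff] at hy
    obtain ⟨ε, hε, hball⟩ := hy
    refine ⟨ε, hε, fun v hv hd => ?_⟩
    have : (⟨v, hv⟩ : affineSpan ℝ P) ∈ Metric.ball y ε := by
      simpa [Metric.mem_ball, Subtype.dist_eq] using hd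
    exact hball this
  · rintro ⟨hxA, ε, hε, h⟩
    refine mem_intrinsicInterior.mpr ⟨⟨x, hxA⟩, ?_, rfl⟩
    rw [mem_interior_iff_mem_nhds, Metric.mem_nhds_iff]
    refine ⟨ε, hε, fun u hu => ?_⟩
    exact h u u.2 (by simpa [Metric.mem_ball, Subtype.dist_eq] using hu)

lemma combo_mem_intrinsicInterior {P : Set (Fin d → ℝ)} (hP : Convex ℝ P)
    {x₀ y : Fin d → ℝ} (hx₀ : x₀ ∈ intrinsicInterior ℝ P) (hy : y ∈ P)
    {s : ℝ} (hs0 : 0 ≤ s) (hs1 : s < 1) :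
    (1 - s) • x₀ + s • y ∈ intrinsicInterior ℝ P := by
  obtain ⟨hx₀A, ε, hε, h⟩ := mem_intrinsicInterior_iff'.mp hx₀
  have hyA : y ∈ affineSpan ℝ P := subset_affineSpan ℝ P hy
  set z := (1 - s) • x₀ + s • y with hz
  have hzA : z ∈ affineSpan ℝ P := by
    have := AffineSubspace.smul_vsub_vadd_mem (affineSpan ℝ P) s hyA hx₀A hx₀A
    have e : z = s • (y - x₀) + x₀ := by
      rw [hz]; ext j; simp [smul_sub, sub_smul]; ring
    rw [e]
    simpa [vsub_eq_sub, vadd_eq_add] using this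
  have h1s : 0 < 1 - s := by linarith
  refine mem_intrinsicInterior_iff'.mpr ⟨hzA, (1 - s) * ε, by positivity, fun v hv hd => ?_⟩
  set u := (1 / (1 - s)) • (v - z) + x₀ with hu
  have huA : u ∈ affineSpan ℝ P := by
    have h2 := AffineSubspace.smul_vsub_vadd_mem (affineSpan ℝ P) (1 / (1 - s)) hv hzA hx₀A
    simpa [hu, vsub_eq_sub, vadd_eq_add] using h2
  have hud : dist u x₀ < ε := by
    have : dist u x₀ = (1 / (1 - s)) * dist v z := by
      rw [dist_eq_norm, dist_eq_norm, hu]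
      simp only [add_sub_cancel_right]
      rw [norm_smul]
      simp [abs_of_pos, h1s, abs_of_pos (by positivity : (0:ℝ) < 1/(1-s))]
    rw [this]
    rw [div_mul_eq_mul_div, one_mul, div_lt_iff₀ h1s]
    calc dist v z < (1 - s) * ε := hd
    _ = ε * (1 - s) := by ring
  have huP : u ∈ P := h u huA hud
  have hvc : v = (1 - s) • u + s • y := by
    rw [hu, hz]
    ext j
    simp only [Pi.add_apply, Pi.smul_apply, Pi.sub_apply, smul_eq_mul]
    field_simp
    ring
  rw [hvc]
  exact hP huP hy (le_of_lt h1s) hs0 (by ring)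

lemma sInner_neg' (w x : Fin d → ℝ) : sInner (-w) x = -sInner w x := by
  simp [sInner, Finset.sum_neg_distrib]

lemma sInner_combo (w x y : Fin d → ℝ) (s : ℝ) :
    sInner w ((1 - s) • x + s • y) = (1 - s) * sInner w x + s * sInner w y := by
  simp only [sInner, Pi.add_apply, Pi.smul_apply, smul_eq_mul, mul_add, Finset.sum_add_distrib,
    Finset.mul_sum]
  congr 1 <;> exact Finset.sum_congr rfl fun j _ => by ring

lemma euclNorm_pos {w : Fin d → ℝ} (hw : w ≠ 0) : 0 < euclNorm w := by
  apply Real.sqrt_pos.mpr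
  obtain ⟨j, hj⟩ := Function.ne_iff.mp hw
  exact Finset.sum_pos' (fun i _ => sq_nonneg _)
    ⟨j, Finset.mem_univ j, by simpa [sq_pos_iff] using hj⟩

lemma euclNorm_neg' (w : Fin d → ℝ) : euclNorm (-w) = euclNorm w := by
  simp [euclNorm]

lemma infNormPair_zero_fun (f : Fin d → ℝ) (hf : ∀ j, f j = 0) (a : ℝ) :
    infNormPair f a = |a| := by
  unfold infNormPair
  have h1 : (fun j => |f j|) = fun _ : Fin d => (0:ℝ) := funext fun j => by rw [hf j, abs_zero]
  have h2 : (⨆ j, |f j|) = 0 := by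
    rw [h1]
    rcases isEmpty_or_nonempty (Fin d) with h | h
    · exact Real.iSup_of_isEmpty _
    · simp
  rw [h2]
  exact max_eq_right (abs_nonneg a)

lemma count_lt_iff (n : ℕ) {η : ℝ} (t : ℝ) (hη : 0 < η) {j : ℕ} (hj : j < n) :
    j < ((Finset.range n).filter (fun k : ℕ => ((k : ℝ) + 1) * η < t)).card ↔
      ((j : ℝ) + 1) * η < t := by
  constructor
  · intro h
    by_contra hc
    push_neg at hc
    have hsub : (Finset.range n).filter (fun k : ℕ => ((k : ℝ) + 1) * η < t) ⊆
        Finset.range j := by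
      intro k hk
      simp only [Finset.mem_filter, Finset.mem_range] at hk ⊢
      have h1 : ((k : ℝ) + 1) * η < ((j : ℝ) + 1) * η := lt_of_lt_of_le hk.2 hc
      have h2 := lt_of_mul_lt_mul_right h1 hη.le
      have h3 : (k : ℝ) < (j : ℝ) := by linarith
      exact_mod_cast h3
    have := Finset.card_le_card hsub
    simp [Finset.card_range] at this
    omega
  · intro h
    have hsub : Finset.range (j + 1) ⊆
        (Finset.range n).filter (fun k : ℕ => ((k : ℝ) + 1) * η < t) := by
      intro k hk
      simp only [Finset.mem_range] at hk
      simp only [Finset.mem_filter, Finset.mem_range]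
      refine ⟨by omega, lt_of_le_of_lt ?_ h⟩
      have : (k : ℝ) ≤ (j : ℝ) := by exact_mod_cast Nat.lt_succ_iff.mp hk
      nlinarith
    have := Finset.card_le_card hsub
    simp [Finset.card_range] at this
    omega


set_option maxHeartbeats 2000000 in
lemma key (d n : ℕ) (hn : 2 ≤ n)
    (P : Set (Fin d → ℝ)) (hP : IsPolytope P)
    (w : Fin d → ℝ) (hw : w ≠ 0) (β : ℝ) (hinside : HypInside w β P)
    (hpos : ∃ y ∈ P, 0 < sInner w y + β)
    (ε : ℝ) (hε : 0 < ε) :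
    ∃ (W : Fin n → Fin d → ℝ) (b : Fin n → ℝ),
      (∀ i, W i ≠ 0) ∧
      IsSlabLayer W b P ∧ IsOriented W b P ∧ (∀ x, ∃ i, 0 ≤ sInner (W i) x + b i) ∧
      ∀ i, EpsClose (W i) (b i) w β ε := by
  classical
  obtain ⟨x₀, hx₀H, hx₀I⟩ := hinside.1
  obtain ⟨y, hyP, hyc⟩ := hpos
  have hx₀P : x₀ ∈ P := intrinsicInterior_subset hx₀I
  have hx₀g : sInner w x₀ + β = 0 := hx₀H
  have hconv : Convex ℝ P := by
    obtain ⟨s, rfl⟩ := hP; exact convex_convexHull ℝ _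
  set c : ℝ := sInner w y + β with hc
  have hc0 : 0 < c := hyc
  set N : ℝ := euclNorm w with hN
  have hN0 : 0 < N := euclNorm_pos hw
  have hn0 : (0:ℝ) < (n:ℝ) := by exact_mod_cast (by omega : 0 < n)
  set η : ℝ := min (c / (2 * n)) (ε * N / (2 * n)) with hηdef
  have hη : 0 < η := lt_min (by positivity) (by positivity)
  have hηc : (n:ℝ) * η ≤ c / 2 := by
    have h1 : η ≤ c / (2 * n) := min_le_left _ _
    calc (n:ℝ) * η ≤ (n:ℝ) * (c / (2 * n)) := by nlinarith
    _ = c / 2 := by field_simp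
  have hηε : (n:ℝ) * η < ε * N := by
    have h1 : η ≤ ε * N / (2 * n) := min_le_right _ _
    have h2 : (n:ℝ) * η ≤ (n:ℝ) * (ε * N / (2 * n)) := by nlinarith
    have h3 : (n:ℝ) * (ε * N / (2 * n)) = ε * N / 2 := by field_simp
    nlinarith
  have hnc : (n:ℝ) * η < c := by nlinarith
  -- the layer
  set W : Fin n → Fin d → ℝ := fun j => if (j:ℕ) = n - 1 then -w else w with hWdef
  set b : Fin n → ℝ := fun j =>
    if (j:ℕ) = n - 1 then (n:ℝ) * η - β else β - (((j:ℕ):ℝ) + 1) * η with hbdef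
  have hpre : ∀ (j : Fin n) (x : Fin d → ℝ), sInner (W j) x + b j =
      if (j:ℕ) = n - 1 then (n:ℝ) * η - (sInner w x + β)
      else (sInner w x + β) - (((j:ℕ):ℝ) + 1) * η := by
    intro j x
    by_cases h : (j:ℕ) = n - 1
    · simp only [hWdef, hbdef, h, if_true, sInner_neg']
      ring
    · simp only [hWdef, hbdef, h, if_false]
      ring
  -- the points
  set pt : ℝ → (Fin d → ℝ) := fun s => (1 - s) • x₀ + s • y with hptdef
  have hgpt : ∀ s : ℝ, sInner w (pt s) + β = s * c := by
    intro s
    rw [hptdef]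
    simp only [sInner_combo]
    have h1 : sInner w x₀ = -β := by linarith
    have h2 : sInner w y = c - β := by rw [hc]; ring
    rw [h1, h2]; ring
  have hptP : ∀ s : ℝ, 0 ≤ s → s ≤ 1 → pt s ∈ P := by
    intro s h0 h1
    exact hconv hx₀P hyP (by linarith) h0 (by ring)
  have hptI : ∀ s : ℝ, 0 ≤ s → s < 1 → pt s ∈ intrinsicInterior ℝ P := by
    intro s h0 h1
    exact combo_mem_intrinsicInterior hconv hx₀I hyP h0 h1
  -- threshold values
  set r : Fin n → ℝ := fun i => if (i:ℕ) = n - 1 then (n:ℝ) * η else (((i:ℕ):ℝ) + 1) * η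
    with hrdef
  have hr_pos : ∀ i, 0 < r i := by
    intro i
    rw [hrdef]
    by_cases h : (i:ℕ) = n - 1 <;> simp only [h, if_true, if_false] <;> positivity
  have hr_le : ∀ i, r i ≤ (n:ℝ) * η := by
    intro i
    rw [hrdef]
    by_cases h : (i:ℕ) = n - 1
    · simp [h]
    · simp only [h, if_false]
      have : ((i:ℕ):ℝ) + 1 ≤ (n:ℝ) := by exact_mod_cast i.isLt
      nlinarith
  have hr_lt : ∀ i, r i < c := fun i => lt_of_le_of_lt (hr_le i) hnc
  have hHyp : ∀ i, Hyp (W i) (b i) = {x | sInner w x + β = r i} := by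
    intro i
    ext x
    simp only [Hyp, Set.mem_setOf_eq, hpre, hrdef]
    by_cases h : (i:ℕ) = n - 1 <;> simp only [h, if_true, if_false] <;>
      constructor <;> intro <;> linarith
  have hr_inj : ∀ i j : Fin n, i ≠ j → r i ≠ r j := by
    intro i j hij
    rw [hrdef]
    have hvij : (i:ℕ) ≠ (j:ℕ) := fun h => hij (Fin.ext h)
    by_cases hi : (i:ℕ) = n - 1 <;> by_cases hj : (j:ℕ) = n - 1
    · omega
    · simp only [hi, hj, if_true, if_false]
      intro h
      have h2 : (n:ℝ) = ((j:ℕ):ℝ) + 1 := by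
        have := mul_right_cancel₀ (ne_of_gt hη) h
        linarith [this]
      have h3 : n = (j:ℕ) + 1 := by exact_mod_cast h2
      omega
    · simp only [hi, hj, if_true, if_false]
      intro h
      have h2 : ((i:ℕ):ℝ) + 1 = (n:ℝ) := mul_right_cancel₀ (ne_of_gt hη) h
      have h3 : (i:ℕ) + 1 = n := by exact_mod_cast h2
      omega
    · simp only [hi, hj, if_false]
      intro h
      have h2 : ((i:ℕ):ℝ) + 1 = ((j:ℕ):ℝ) + 1 := mul_right_cancel₀ (ne_of_gt hη) h
      have h3 : (i:ℕ) = (j:ℕ) := by exact_mod_cast (by linarith : ((i:ℕ):ℝ) = ((j:ℕ):ℝ))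
      exact hvij h3
  -- nonzero rows
  have hWnz : ∀ i, W i ≠ 0 := by
    intro i
    rw [hWdef]
    by_cases h : (i:ℕ) = n - 1 <;> simp only [h, if_true, if_false]
    · exact neg_ne_zero.mpr hw
    · exact hw
  -- pattern lemmas
  have pat_top : ∀ x : Fin d → ℝ, (n:ℝ) * η < sInner w x + β →
      {j | 0 < sInner (W j) x + b j} = slabSet n n := by
    intro x hx
    ext j
    simp only [Set.mem_setOf_eq, hpre, slabSet, Set.mem_symmDiff, Set.mem_setOf_eq]
    by_cases h : (j:ℕ) = n - 1
    · simp only [h, if_true]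
      constructor
      · intro h1; linarith
      · rintro (⟨-, h2⟩ | ⟨-, h2⟩)
        · exact absurd trivial h2
        · exact absurd (by omega : n - 1 < n) h2
    · simp only [h, if_false]
      have h1 : ((j:ℕ):ℝ) + 1 ≤ (n:ℝ) := by exact_mod_cast j.isLt
      constructor
      · intro _; exact Or.inl ⟨j.isLt, not_false⟩
      · intro _; nlinarith
  have pat_lo : ∀ x : Fin d → ℝ, sInner w x + β < (n:ℝ) * η →
      {j | 0 < sInner (W j) x + b j} =
        slabSet n (((Finset.range n).filter
          (fun k : ℕ => ((k : ℝ) + 1) * η < sInner w x + β)).card) := by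
    intro x hx
    set t : ℝ := sInner w x + β with ht
    set i : ℕ := ((Finset.range n).filter (fun k : ℕ => ((k : ℝ) + 1) * η < t)).card with hi
    have hcard : i ≤ n - 1 := by
      have hsub : (Finset.range n).filter (fun k : ℕ => ((k : ℝ) + 1) * η < t) ⊆
          Finset.range (n - 1) := by
        intro k hk
        simp only [Finset.mem_filter, Finset.mem_range] at hk ⊢
        have h1 : ((k:ℝ) + 1) * η < (n:ℝ) * η := lt_of_lt_of_le hk.2 (le_of_lt hx)
        have h2 : (k:ℝ) + 1 < (n:ℝ) := lt_of_mul_lt_mul_right h1 hη.le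
        have h3 : k + 1 < n := by exact_mod_cast h2
        omega
      have := Finset.card_le_card hsub
      simpa [Finset.card_range] using this
    ext j
    simp only [Set.mem_setOf_eq, hpre, slabSet, Set.mem_symmDiff, Set.mem_setOf_eq]
    by_cases h : (j:ℕ) = n - 1
    · simp only [h, if_true]
      constructor
      · intro _
        exact Or.inr ⟨trivial, by omega⟩
      · intro _; linarith
    · simp only [h, if_false]
      have hcnt := count_lt_iff n t hη j.isLt
      constructor
      · intro h1
        exact Or.inl ⟨hcnt.mpr (by linarith), not_false⟩
      · rintro (⟨h1, -⟩ | ⟨h1, -⟩)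
        · have := hcnt.mp h1; linarith
        · exact h1.elim
  refine ⟨W, b, hWnz, ⟨hWnz, ?_, ?_⟩, ⟨?_, ?_⟩, ?_, ?_⟩
  -- HypInside
  · intro i
    constructor
    · refine ⟨pt (r i / c), ?_, ?_⟩
      · rw [hHyp i]
        simp only [Set.mem_setOf_eq, hgpt]
        field_simp
      · exact hptI _ (by positivity) ((div_lt_one hc0).mpr (hr_lt i))
    · intro hsub
      have := hsub hx₀P
      rw [hHyp i] at this
      simp only [Set.mem_setOf_eq, hx₀g] at this
      exact absurd this.symm (ne_of_gt (hr_pos i))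
  -- disjoint hyperplanes
  · intro i j hij
    rw [Set.eq_empty_iff_forall_notMem]
    rintro x ⟨⟨h1, h2⟩, -⟩
    rw [hHyp i] at h1
    rw [hHyp j] at h2
    exact hr_inj i j hij (by rw [← h1, ← h2])
  -- oriented (a)
  · intro x hxP hnz
    rcases lt_trichotomy (sInner w x + β) ((n:ℝ) * η) with hlt | heq | hgt
    · exact ⟨_, by
        have := Finset.card_filter_le (Finset.range n)
          (fun k : ℕ => ((k : ℝ) + 1) * η < sInner w x + β)
        simpa [Finset.card_range] using this, pat_lo x hlt⟩
    · exfalso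
      have hlast : ((⟨n - 1, by omega⟩ : Fin n) : ℕ) = n - 1 := rfl
      have := hnz ⟨n - 1, by omega⟩
      rw [hpre] at this
      simp only [hlast, if_true] at this
      exact this (by linarith)
    · exact ⟨n, le_refl n, pat_top x hgt⟩
  -- oriented (b)
  · intro i hi
    by_cases hin : i = n
    · refine ⟨y, hyP, ?_, by rw [hin]; exact pat_top y (by rw [← hc]; exact hnc)⟩
      intro j
      rw [hpre]
      by_cases h : (j:ℕ) = n - 1
      · simp only [h, if_true]
        rw [← hc]
        linarith
      · simp only [h, if_false]
        have h1 : ((j:ℕ):ℝ) + 1 ≤ (n:ℝ) := by exact_mod_cast j.isLt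
        rw [← hc]
        nlinarith
    · -- i ≤ n - 1
      have hi1 : i ≤ n - 1 := by omega
      have hiR : (i:ℝ) ≤ (n:ℝ) - 1 := by
        have : (i:ℝ) ≤ ((n - 1 : ℕ):ℝ) := by exact_mod_cast hi1
        have h2 : ((n - 1 : ℕ):ℝ) = (n:ℝ) - 1 := by
          have : 1 ≤ n := by omega
          push_cast [this]
          ring
        linarith
      set s : ℝ := ((i:ℝ) * η + η / 2) / c with hs
      have hs0 : 0 ≤ s := by positivity
      have htval : sInner w (pt s) + β = (i:ℝ) * η + η / 2 := by
        rw [hgpt, hs]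
        field_simp
      have htlt : (i:ℝ) * η + η / 2 < (n:ℝ) * η := by
        have h1 : (i:ℝ) * η ≤ ((n:ℝ) - 1) * η :=
          mul_le_mul_of_nonneg_right hiR (le_of_lt hη)
        have h2 : ((n:ℝ) - 1) * η = (n:ℝ) * η - η := by ring
        linarith only [h1, h2, hη]
      have hs1 : s < 1 := by
        rw [hs, div_lt_one hc0]
        linarith [htlt, hnc]
      refine ⟨pt s, hptP s hs0 (le_of_lt hs1), ?_, ?_⟩
      · intro j
        rw [hpre, htval]
        by_cases h : (j:ℕ) = n - 1
        · simp only [h, if_true]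
          intro habs
          nlinarith
        · simp only [h, if_false]
          intro habs
          have h2 : ((j:ℕ):ℝ) + 1 = (i:ℝ) + 1/2 := by
            have := mul_right_cancel₀ (ne_of_gt hη) (by linarith : (((j:ℕ):ℝ) + 1) * η = ((i:ℝ) + 1/2) * η)
            linarith [this]
          have h3 : (2 * (j:ℕ) + 2 : ℝ) = 2 * (i:ℝ) + 1 := by push_cast; linarith
          have h4 : 2 * (j:ℕ) + 2 = 2 * i + 1 := by exact_mod_cast h3
          omega
      · rw [pat_lo (pt s) (by rw [htval]; exact htlt)]
        congr 1
        rw [htval]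
        have hfe : (Finset.range n).filter
            (fun k : ℕ => ((k : ℝ) + 1) * η < (i:ℝ) * η + η / 2) = Finset.range i := by
          ext k
          simp only [Finset.mem_filter, Finset.mem_range]
          constructor
          · rintro ⟨-, hk⟩
            have h2 : (k:ℝ) + 1 < (i:ℝ) + 1/2 := by
              by_contra hcon
              push_neg at hcon
              nlinarith
            have h3 : (k:ℝ) < (i:ℝ) := by linarith
            exact_mod_cast h3
          · intro hk
            have h2 : (k:ℝ) + 1 ≤ (i:ℝ) := by exact_mod_cast hk
            constructor
            · omega
            · nlinarith
        rw [hfe, Finset.card_range]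
  -- transparent
  · intro x
    by_cases h : sInner w x + β ≤ (n:ℝ) * η
    · have hnn : n - 1 < n := by omega
      refine ⟨⟨n - 1, hnn⟩, ?_⟩
      rw [hpre]
      simp only [Fin.val_mk, if_pos]
      linarith
    · push_neg at h
      have h0n : 0 < n := by omega
      refine ⟨⟨0, h0n⟩, ?_⟩
      rw [hpre]
      simp only [Fin.val_mk]
      rw [if_neg (by omega : ¬ (0:ℕ) = n - 1)]
      have hn2 : (2:ℝ) ≤ (n:ℝ) := by exact_mod_cast hn
      push_cast
      nlinarith
  -- eps-close
  · intro i
    by_cases h : (i:ℕ) = n - 1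
    · have hWi : W i = -w := by rw [hWdef]; simp [h]
      have hbi : b i = (n:ℝ) * η - β := by rw [hbdef]; simp [h]
      unfold EpsClose
      refine lt_of_le_of_lt (min_le_right _ _) ?_
      rw [hWi, hbi, euclNorm_neg', ← hN]
      rw [infNormPair_zero_fun _ (fun j => by simp [neg_div]) _]
      have he : ((n:ℝ) * η - β) / N + β / N = (n:ℝ) * η / N := by
        field_simp
        ring
      rw [he, abs_of_pos (by positivity)]
      rw [div_lt_iff₀ hN0]
      linarith
    · have hWi : W i = w := by rw [hWdef]; simp [h]
      have hbi : b i = β - (((i:ℕ):ℝ) + 1) * η := by rw [hbdef]; simp [h]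
      unfold EpsClose
      refine lt_of_le_of_lt (min_le_left _ _) ?_
      rw [hWi, hbi, ← hN]
      rw [infNormPair_zero_fun _ (fun j => by ring) _]
      have he : (β - (((i:ℕ):ℝ) + 1) * η) / N - β / N = -((((i:ℕ):ℝ) + 1) * η / N) := by
        field_simp
        ring
      rw [he, abs_neg, abs_of_pos (by positivity)]
      rw [div_lt_iff₀ hN0]
      have h1 : ((i:ℕ):ℝ) + 1 ≤ (n:ℝ) := by exact_mod_cast i.isLt
      nlinarith

/-- **From a hyperplane to an oriented transparent slab layer.**
Given a bounded set `X`, a polytope `P ⊆ X`, a hyperplane inside `P`, `ε > 0`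
and `n ≥ 2`, there is a ReLU layer with `n` neurons whose rows are nonzero that
is an oriented slab layer on `P`, is transparent on `X`, and all of whose
hyperplanes are `ε`-close to the given one. -/
theorem exists_oriented_slab_layer (d n : ℕ) (hn : 2 ≤ n)
    (X : Set (Fin d → ℝ)) (hX : Bornology.IsBounded X)
    (P : Set (Fin d → ℝ)) (hP : IsPolytope P) (hPX : P ⊆ X)
    (w : Fin d → ℝ) (hw : w ≠ 0) (β : ℝ) (hinside : HypInside w β P)
    (ε : ℝ) (hε : 0 < ε) :
    ∃ (W : Fin n → Fin d → ℝ) (b : Fin n → ℝ),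
      (∀ i, W i ≠ 0) ∧
      IsSlabLayer W b P ∧ IsOriented W b P ∧ Transparent W b X ∧
      ∀ i, EpsClose (W i) (b i) w β ε := by
  obtain ⟨y, hyP, hy0⟩ := Set.not_subset.mp hinside.2
  have hy : sInner w y + β ≠ 0 := hy0
  rcases lt_or_gt_of_ne hy with hneg | hpos
  · have hw' : -w ≠ 0 := neg_ne_zero.mpr hw
    have hHypEq : Hyp (-w) (-β) = Hyp w β := by
      ext x
      simp only [Hyp, Set.mem_setOf_eq, sInner_neg']
      constructor <;> intro <;> linarith
    have hinside' : HypInside (-w) (-β) P :=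
      ⟨by rw [hHypEq]; exact hinside.1, by rw [hHypEq]; exact hinside.2⟩
    have hpos' : ∃ z ∈ P, 0 < sInner (-w) z + (-β) :=
      ⟨y, hyP, by rw [sInner_neg']; linarith⟩
    obtain ⟨W, b, h1, h2, h3, h4, h5⟩ := key d n hn P hP (-w) hw' (-β) hinside' hpos' ε hε
    refine ⟨W, b, h1, h2, h3, fun x _ => h4 x, fun i => ?_⟩
    have h6 := h5 i
    unfold EpsClose at h6 ⊢
    rw [euclNorm_neg'] at h6
    simp only [Pi.neg_apply, neg_div, sub_neg_eq_add, ← sub_eq_add_neg] at h6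
    rw [min_comm]
    exact h6
  · obtain ⟨W, b, h1, h2, h3, h4, h5⟩ :=
      key d n hn P hP w hw β hinside ⟨y, hyP, hpos⟩ ε hε
    exact ⟨W, b, h1, h2, h3, fun x _ => h4 x, h5⟩

end ReLUNet
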